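/- (Convergence of the neural optimal stopping boundary method, continuous case.) Assume: (i) the conditional absolute continuity assumption with moduli (ρ_t)_{t∈𝒯} such that ρ(ι) := Σ_{t∈𝒯} ρ_t(ι) → 0 as ι → 0; (ii) Φ = Σ_{t∈𝒯}|Y_t| is square-integrable; (iii) tightness: for every δ > 0 there is a compact K ⊆ E with Q(Ξ(X_t) ∈ K for all t ∈ 𝒯) ≥ 1 − δ; (iv) 𝔑 is a nonempty family of functions g : 𝒯 × E → [0,∞) with g(t,·) continuous for all t, satisfying the universal approximation property: for every h : 𝒯 × E → [0,∞) with h(t,·) continuous for all t, every compact K ⊆ E and every ι > 0 there exists g ∈ 𝔑 with sup_{𝒯×K} |h − g| ≤ ι; and (v) f⋄ : 𝒯 × E → [0,∞) is a boundary with f⋄(t,·) continuous for all t. Then for every δ > 0 there exist ε > 0 and γ > 0 such that every g ∈ 𝔑 satisfying v(μ_g^ε) ≥ sup_{g'∈𝔑} v(μ_{g'}^ε) − γ also satisfies v(τ_g) ≥ v(τ_{f⋄}) − δ. -/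

import Mathlib

open MeasureTheory
open scoped ENNReal NNReal Classical

/-- First hitting time of the family of sets `S` along the path `x`, valued in `T ∪ {∞}`:
the least `t ∈ T` with `x t ∈ S t`, and `⊤` (= ∞) if there is no such `t`. -/
noncomputable def firstHit {T X : Type*} [Fintype T] [LinearOrder T]
    (S : T → Set X) (x : T → X) : WithTop T :=
  (Finset.univ.filter fun t => x t ∈ S t).min

/-- Reward collected at a (possibly infinite) stopping date: `Y t ω` if `τ = t ∈ T`, and `0`
if `τ = ∞` (that is, `Y_τ 1_{τ ≠ ∞}`). -/
noncomputable def hitReward {T Ω : Type*} (Y : T → Ω → ℝ) (τ : WithTop T) (ω : Ω) : ℝ :=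
  WithTop.recTopCoe 0 (fun t => Y t ω) τ

/-- Relaxed phase indicator `χ^ε(u) = min(1, max(0, 1 − u/ε))` for `u ∈ [0,∞]`,
with `χ^ε(∞) = 0`. -/
noncomputable def relaxChi (ε : ℝ) (u : ℝ≥0∞) : ℝ :=
  if u = ⊤ then 0 else min 1 (max 0 (1 - u.toReal / ε))

/-- Pathwise stopping weights defined recursively in increasing `t` by
`q t = p t * (1 − Σ_{s < t} q s)`. -/
noncomputable def stopWeight {T : Type*} [Fintype T] [LinearOrder T] (p : T → ℝ) (t : T) : ℝ :=
  p t * (1 - ∑ s ∈ (Finset.univ.filter fun s : T => s < t).attach, stopWeight p s.1)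
termination_by (Finset.univ.filter fun s : T => s < t).card
decreasing_by
  have hst : (s : T) < t := (Finset.mem_filter.mp s.2).2
  apply Finset.card_lt_card
  rw [Finset.ssubset_def]
  refine ⟨fun u hu => ?_, fun hsub => ?_⟩
  · simp only [Finset.mem_filter, Finset.mem_univ, true_and] at hu ⊢
    exact hu.trans hst
  · have h1 : (s : T) ∈ Finset.univ.filter (fun u : T => u < t) := by simp [hst]
    have h2 := hsub h1
    simp only [Finset.mem_filter, Finset.mem_univ, true_and] at h2
    exact lt_irrefl _ h2

open Finset

lemma min_filter_eq_coe_iff {T : Type*} [Fintype T] [LinearOrder T]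
    (P : T → Prop) (t : T) :
    (Finset.univ.filter fun s => P s).min = (t : WithTop T) ↔ P t ∧ ∀ s < t, ¬ P s := by
  constructor
  · intro h
    have ht : t ∈ Finset.univ.filter fun s => P s := Finset.mem_of_min h
    refine ⟨(Finset.mem_filter.mp ht).2, fun s hs hP => ?_⟩
    have : (Finset.univ.filter fun s => P s).min ≤ (s : WithTop T) :=
      Finset.min_le (by simp [hP])
    rw [h] at this
    exact absurd (WithTop.coe_le_coe.mp this) (not_le.mpr hs)
  · rintro ⟨hPt, hmin⟩
    have ht : t ∈ Finset.univ.filter fun s => P s := by simp [hPt]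
    obtain ⟨b, hb⟩ := Finset.min_of_mem ht
    have hbmem := Finset.mem_of_min hb
    have hPb : P b := (Finset.mem_filter.mp hbmem).2
    have hbt : b ≤ t := WithTop.coe_le_coe.mp (hb ▸ Finset.min_le ht)
    have : ¬ b < t := fun h => hmin b h hPb
    rw [hb, le_antisymm hbt (not_lt.mp this)]

lemma hitReward_eq_sum {T Ω : Type*} [Fintype T] (Y : T → Ω → ℝ) (τ : WithTop T) (ω : Ω) :
    hitReward Y τ ω = ∑ t : T, if τ = (t : WithTop T) then Y t ω else 0 := by
  induction τ using WithTop.recTopCoe with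
  | top => simp [hitReward]
  | coe t0 =>
    rw [Finset.sum_eq_single t0]
    · simp [hitReward]
    · intro b _ hb
      rw [if_neg]
      exact fun h => hb (WithTop.coe_injective h).symm
    · simp

lemma stopWeight_eq {T : Type*} [Fintype T] [LinearOrder T] (p : T → ℝ) (t : T) :
    stopWeight p t
      = p t * (1 - ∑ s ∈ Finset.univ.filter fun s : T => s < t, stopWeight p s) := by
  rw [stopWeight, Finset.sum_attach]

lemma stopWeight_bounds {T : Type*} [Fintype T] [LinearOrder T] (p : T → ℝ) (hp : ∀ t, p t ∈ Set.Icc (0:ℝ) 1) :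
    ∀ t : T, (0 ≤ ∑ s ∈ Finset.univ.filter fun s : T => s < t, stopWeight p s)
      ∧ 0 ≤ stopWeight p t
      ∧ (∑ s ∈ Finset.univ.filter fun s : T => s < t, stopWeight p s) + stopWeight p t ≤ 1 := by
  intro t
  induction t using WellFoundedLT.induction with
  | _ t IH =>
    have hsum0 : 0 ≤ ∑ s ∈ Finset.univ.filter fun s : T => s < t, stopWeight p s :=
      Finset.sum_nonneg fun s hs => (IH s (Finset.mem_filter.mp hs).2).2.1
    have hsum1 : (∑ s ∈ Finset.univ.filter fun s : T => s < t, stopWeight p s) ≤ 1 := by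
      rcases (Finset.univ.filter fun s : T => s < t).eq_empty_or_nonempty with he | hne
      · simp [he]
      · set F := Finset.univ.filter fun s : T => s < t with hF
        have hmem := F.max'_mem hne
        set m := F.max' hne with hm
        have hmt : m < t := (Finset.mem_filter.mp hmem).2
        have hsplit : F = insert m (Finset.univ.filter fun s : T => s < m) := by
          ext s
          simp only [hF, Finset.mem_insert, Finset.mem_filter, Finset.mem_univ, true_and]
          constructor
          · intro hs
            rcases eq_or_lt_of_le (F.le_max' s (by simp [hF, hs])) with h | h
            · exact Or.inl h
            · exact Or.inr h
          · rintro (rfl | hs)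
            · exact hmt
            · exact hs.trans hmt
        rw [hsplit, Finset.sum_insert (by simp)]
        have := IH m hmt
        linarith [this.2.2]
    have hpt := hp t
    have hq : 0 ≤ stopWeight p t ∧ stopWeight p t ≤ 1 - ∑ s ∈ Finset.univ.filter
        fun s : T => s < t, stopWeight p s := by
      rw [stopWeight_eq]
      constructor
      · exact mul_nonneg hpt.1 (by linarith)
      · nlinarith [hpt.1, hpt.2]
    exact ⟨hsum0, hq.1, by linarith [hq.2]⟩

lemma stopWeight_mem_Icc {T : Type*} [Fintype T] [LinearOrder T] (p : T → ℝ) (hp : ∀ t, p t ∈ Set.Icc (0:ℝ) 1) (t : T) :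
    stopWeight p t ∈ Set.Icc (0:ℝ) 1 := by
  obtain ⟨h0, h1, h2⟩ := stopWeight_bounds p hp t
  exact ⟨h1, by linarith⟩

lemma stopWeight_measurable {T Ω : Type*} [Fintype T] [LinearOrder T] [MeasurableSpace Ω]
    (p : T → Ω → ℝ) (hp : ∀ t, Measurable (p t)) (t : T) :
    Measurable (fun ω => stopWeight (fun s => p s ω) t) := by
  induction t using WellFoundedLT.induction with
  | _ t IH =>
    have : (fun ω => stopWeight (fun s => p s ω) t)
        = fun ω => p t ω * (1 - ∑ s ∈ Finset.univ.filter fun s : T => s < t,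
            stopWeight (fun s' => p s' ω) s) := by
      funext ω; rw [stopWeight_eq]
    rw [this]
    exact (hp t).mul ((measurable_const.sub
      (Finset.measurable_sum _ fun s hs => IH s (Finset.mem_filter.mp hs).2)))

lemma stopWeight_eq_ite {T : Type*} [Fintype T] [LinearOrder T] (p : T → ℝ)
    (hp : ∀ t, p t = 0 ∨ p t = 1) (t : T) :
    stopWeight p t
      = if (Finset.univ.filter fun s : T => p s = 1).min = (t : WithTop T) then 1 else 0 := by
  induction t using WellFoundedLT.induction with
  | _ t IH =>
    set F := Finset.univ.filter fun s : T => p s = 1 with hF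
    rcases hp t with h0 | h1
    · rw [stopWeight_eq, h0, zero_mul, if_neg]
      intro hmin
      have := ((min_filter_eq_coe_iff (fun s => p s = 1) t).mp hmin).1
      rw [h0] at this; norm_num at this
    · rw [stopWeight_eq, h1, one_mul]
      by_cases hex : ∃ s, s < t ∧ p s = 1
      · obtain ⟨s0, hs0t, hs0⟩ := hex
        have hs0F : s0 ∈ F := by simp [hF, hs0]
        obtain ⟨m, hm⟩ := Finset.min_of_mem hs0F
        have hmF : m ∈ F := Finset.mem_of_min hm
        have hmt : m < t :=
          lt_of_le_of_lt (WithTop.coe_le_coe.mp (hm ▸ Finset.min_le hs0F)) hs0t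
        have hsum : (∑ s ∈ Finset.univ.filter fun s : T => s < t, stopWeight p s) = 1 := by
          rw [Finset.sum_congr rfl fun s hs => IH s (Finset.mem_filter.mp hs).2]
          rw [Finset.sum_eq_single m]
          · rw [if_pos hm]
          · intro b _ hb
            rw [if_neg]
            intro hc
            exact hb (WithTop.coe_injective (hm.symm.trans hc)).symm
          · intro hmem
            exact absurd (by simp [hmt]) hmem
        rw [hsum, if_neg]
        · ring
        · intro hmin
          exact ((min_filter_eq_coe_iff (fun s => p s = 1) t).mp hmin).2 m hmt
            ((Finset.mem_filter.mp hmF).2)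
      · push_neg at hex
        have hmin : F.min = (t : WithTop T) :=
          (min_filter_eq_coe_iff (fun s => p s = 1) t).mpr ⟨h1, fun s hs => hex s hs⟩
        have hsum : (∑ s ∈ Finset.univ.filter fun s : T => s < t, stopWeight p s) = 0 := by
          apply Finset.sum_eq_zero
          intro s hs
          rw [IH s (Finset.mem_filter.mp hs).2, if_neg]
          intro hc
          have hst := (Finset.mem_filter.mp hs).2
          have : p s = 1 := ((min_filter_eq_coe_iff (fun s => p s = 1) s).mp hc).1
          exact hex s hst this
        rw [hsum, if_pos hmin]; ring

lemma relaxChi_mem_Icc (ε : ℝ) (u : ℝ≥0∞) : relaxChi ε u ∈ Set.Icc (0:ℝ) 1 := by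
  unfold relaxChi
  split
  · norm_num
  · exact ⟨le_min (by norm_num) (le_max_left _ _), min_le_left _ _⟩

lemma relaxChi_zero (ε : ℝ) : relaxChi ε 0 = 1 := by
  simp [relaxChi]

lemma relaxChi_eq_one_imp {ε : ℝ} (hε : 0 < ε) {u : ℝ≥0∞} (h : relaxChi ε u = 1) : u = 0 := by
  by_contra hu
  unfold relaxChi at h
  split at h
  · norm_num at h
  · rename_i htop
    have hpos : 0 < u.toReal := ENNReal.toReal_pos hu htop
    have : min 1 (max 0 (1 - u.toReal / ε)) < 1 := by
      apply min_lt_of_right_lt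
      have : u.toReal / ε > 0 := div_pos hpos hε
      rcases le_or_gt (1 - u.toReal / ε) 0 with h' | h'
      · calc max 0 (1 - u.toReal / ε) = 0 := max_eq_left h'
          _ < 1 := one_pos
      · rw [max_eq_right h'.le]; linarith
    rw [h] at this; exact lt_irrefl _ this

lemma relaxChi_eq_zero_of_le {ε : ℝ} (hε : 0 < ε) {u : ℝ≥0∞} (h : ENNReal.ofReal ε ≤ u) :
    relaxChi ε u = 0 := by
  unfold relaxChi
  split
  · rfl
  · rename_i htop
    have hle : ε ≤ u.toReal := by
      rw [← ENNReal.ofReal_le_iff_le_toReal htop]; exact h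
    have h1 : 1 - u.toReal / ε ≤ 0 := by
      have : 1 ≤ u.toReal / ε := (one_le_div hε).mpr hle
      linarith
    rw [max_eq_left h1]; simp



lemma sum_stopWeight_mul_eq_hitReward {T Ω X E : Type*} [Fintype T] [LinearOrder T]
    (Y : T → Ω → ℝ) (α : X → ℝ≥0) (Ξ : X → E) (Xp : T → Ω → X) (ε : ℝ)
    (b c : T → E → ℝ≥0) (ω : Ω)
    (h : ∀ t, (relaxChi ε ((b t (Ξ (Xp t ω)) : ℝ≥0∞) - (α (Xp t ω) : ℝ≥0∞)) = 1
          ∧ c t (Ξ (Xp t ω)) ≤ α (Xp t ω))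
        ∨ (relaxChi ε ((b t (Ξ (Xp t ω)) : ℝ≥0∞) - (α (Xp t ω) : ℝ≥0∞)) = 0
          ∧ ¬ c t (Ξ (Xp t ω)) ≤ α (Xp t ω))) :
    ∑ t, stopWeight (fun s => relaxChi ε ((b s (Ξ (Xp s ω)) : ℝ≥0∞) - (α (Xp s ω) : ℝ≥0∞))) t
        * Y t ω
      = hitReward Y (firstHit (fun t => {x | c t (Ξ x) ≤ α x}) (fun t => Xp t ω)) ω := by
  set p := fun s => relaxChi ε ((b s (Ξ (Xp s ω)) : ℝ≥0∞) - (α (Xp s ω) : ℝ≥0∞)) with hp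
  have hp01 : ∀ t, p t = 0 ∨ p t = 1 := by
    intro t; rcases h t with ⟨h1, _⟩ | ⟨h0, _⟩
    · exact Or.inr h1
    · exact Or.inl h0
  have hfilter : (Finset.univ.filter fun s : T => p s = 1)
      = Finset.univ.filter fun t : T => Xp t ω ∈ {x | c t (Ξ x) ≤ α x} := by
    apply Finset.filter_congr
    intro t _
    rcases h t with ⟨h1, hc⟩ | ⟨h0, hc⟩
    · exact iff_of_true h1 hc
    · have h0' : p t = 0 := h0
      exact iff_of_false (by rw [h0']; norm_num) hc
  rw [hitReward_eq_sum]
  rw [show firstHit (fun t => {x | c t (Ξ x) ≤ α x}) (fun t => Xp t ω)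
    = (Finset.univ.filter fun t : T => Xp t ω ∈ {x | c t (Ξ x) ≤ α x}).min from rfl]
  apply Finset.sum_congr rfl
  intro t _
  rw [stopWeight_eq_ite p hp01 t, hfilter, ite_mul, one_mul, zero_mul]
  congr 1

lemma abs_hitReward_le {T Ω : Type*} [Fintype T] (Y : T → Ω → ℝ) (τ : WithTop T) (ω : Ω) :
    |hitReward Y τ ω| ≤ ∑ t, |Y t ω| := by
  induction τ using WithTop.recTopCoe with
  | top => simp [hitReward]; positivity
  | coe t0 =>
    calc |hitReward Y (t0 : WithTop T) ω| = |Y t0 ω| := rfl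
      _ ≤ ∑ t, |Y t ω| :=
        Finset.single_le_sum (f := fun t => |Y t ω|) (fun t _ => abs_nonneg _) (Finset.mem_univ _)

lemma measurable_hitReward_firstHit {T Ω X : Type*} [Fintype T] [LinearOrder T]
    [MeasurableSpace Ω] [MeasurableSpace X]
    (Y : T → Ω → ℝ) (hY : ∀ t, Measurable (Y t))
    (S : T → Set X) (hS : ∀ t, MeasurableSet (S t))
    (Xp : T → Ω → X) (hX : ∀ t, Measurable (Xp t)) :
    Measurable (fun ω => hitReward Y (firstHit S (fun t => Xp t ω)) ω) := by
  have : (fun ω => hitReward Y (firstHit S (fun t => Xp t ω)) ω)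
      = fun ω => ∑ t : T, ({ω' | firstHit S (fun t' => Xp t' ω') = (t : WithTop T)}).indicator
          (Y t) ω := by
    funext ω
    rw [hitReward_eq_sum]
    apply Finset.sum_congr rfl
    intro t _
    by_cases hm : firstHit S (fun t' => Xp t' ω) = (t : WithTop T)
    · rw [if_pos hm]
      exact (Set.indicator_of_mem (show ω ∈ {ω' | firstHit S (fun t' => Xp t' ω')
        = (t : WithTop T)} from hm) (Y t)).symm
    · rw [if_neg hm]
      exact (Set.indicator_of_notMem (show ω ∉ {ω' | firstHit S (fun t' => Xp t' ω')
        = (t : WithTop T)} from hm) (Y t)).symm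
  rw [this]
  apply Finset.measurable_sum
  intro t _
  apply (hY t).indicator
  have : {ω' | firstHit S (fun t' => Xp t' ω') = (t : WithTop T)}
      = {ω' | Xp t ω' ∈ S t} ∩ ⋂ (s : T), ⋂ (_ : s < t), {ω' | Xp s ω' ∉ S s} := by
    ext ω'
    simp only [Set.mem_setOf_eq, Set.mem_inter_iff, Set.mem_iInter, firstHit,
      min_filter_eq_coe_iff]
  rw [this]
  exact ((hX t) (hS t)).inter
    (MeasurableSet.iInter fun s => MeasurableSet.iInter fun _ => ((hX s) (hS s)).compl)

lemma measurable_relaxChi (ε : ℝ) : Measurable (relaxChi ε) := by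
  unfold relaxChi
  refine Measurable.ite (measurableSet_singleton ⊤) measurable_const ?_
  exact (continuous_const.min ((continuous_const.max
    (continuous_const.sub (continuous_id.div_const ε))))).measurable.comp
    ENNReal.measurable_toReal

lemma integral_small {Ω : Type*} [MeasurableSpace Ω] (Q : Measure Ω) [IsProbabilityMeasure Q]
    (Φ : Ω → ℝ) (hΦint : Integrable Φ Q) {δ' : ℝ} (hδ' : 0 < δ') :
    ∃ η > 0, ∀ B : Set Ω, Q B ≤ ENNReal.ofReal η → ∫ ω in B, Φ ω ∂Q ≤ δ' := by
  have hfin : ∫⁻ ω, ENNReal.ofReal ‖Φ ω‖ ∂Q ≠ ⊤ := by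
    have := hΦint.2
    rw [hasFiniteIntegral_iff_norm] at this
    exact this.ne
  obtain ⟨θ, hθ, hθ'⟩ := exists_pos_setLIntegral_lt_of_measure_lt (μ := Q)
    (f := fun ω => ENNReal.ofReal ‖Φ ω‖) hfin (ε := ENNReal.ofReal δ')
    ((ENNReal.ofReal_pos.mpr hδ').ne')
  rcases eq_or_ne θ ⊤ with rfl | hθtop
  · refine ⟨1, one_pos, fun B hB => ?_⟩
    have h1 : Q B < ⊤ := lt_of_le_of_lt hB (by simp)
    have := hθ' B h1
    calc ∫ ω in B, Φ ω ∂Q ≤ ‖∫ ω in B, Φ ω ∂Q‖ := le_abs_self _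
      _ ≤ (∫⁻ ω in B, ENNReal.ofReal ‖Φ ω‖ ∂Q).toReal := norm_integral_le_lintegral_norm _
      _ ≤ δ' := by
          rw [← ENNReal.toReal_ofReal hδ'.le]
          exact ENNReal.toReal_mono (by simp) this.le
  · have hθr : 0 < θ.toReal := ENNReal.toReal_pos hθ.ne' hθtop
    refine ⟨θ.toReal / 2, by linarith, fun B hB => ?_⟩
    have hlt : Q B < θ := lt_of_le_of_lt hB
      (calc ENNReal.ofReal (θ.toReal/2)
          < ENNReal.ofReal θ.toReal := (ENNReal.ofReal_lt_ofReal_iff hθr).mpr (by linarith)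
        _ = θ := ENNReal.ofReal_toReal hθtop)
    have := hθ' B hlt
    calc ∫ ω in B, Φ ω ∂Q ≤ ‖∫ ω in B, Φ ω ∂Q‖ := le_abs_self _
      _ ≤ (∫⁻ ω in B, ENNReal.ofReal ‖Φ ω‖ ∂Q).toReal := norm_integral_le_lintegral_norm _
      _ ≤ δ' := by
          rw [← ENNReal.toReal_ofReal hδ'.le]
          exact ENNReal.toReal_mono (by simp) this.le

lemma integral_diff_le {Ω : Type*} [MeasurableSpace Ω] (Q : Measure Ω) [IsProbabilityMeasure Q]
    (Φ f₁ f₂ : Ω → ℝ) (hΦint : Integrable Φ Q)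
    (hf₁ : Integrable f₁ Q) (hf₂ : Integrable f₂ Q)
    {B : Set Ω} (hB : MeasurableSet B)
    (heq : ∀ ω ∉ B, f₁ ω = f₂ ω)
    (hb₁ : ∀ ω, |f₁ ω| ≤ Φ ω) (hb₂ : ∀ ω, |f₂ ω| ≤ Φ ω) :
    ∫ ω, f₂ ω ∂Q - 2 * ∫ ω in B, Φ ω ∂Q ≤ ∫ ω, f₁ ω ∂Q := by
  have key : |∫ ω, f₁ ω ∂Q - ∫ ω, f₂ ω ∂Q| ≤ 2 * ∫ ω in B, Φ ω ∂Q := by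
    rw [← integral_sub hf₁ hf₂]
    calc |∫ ω, (f₁ ω - f₂ ω) ∂Q| ≤ ∫ ω, |f₁ ω - f₂ ω| ∂Q := by
          simpa [Real.norm_eq_abs] using norm_integral_le_integral_norm (fun ω => f₁ ω - f₂ ω) (μ := Q)
      _ ≤ ∫ ω, B.indicator (fun ω' => 2 * Φ ω') ω ∂Q := by
          apply integral_mono (hf₁.sub hf₂).abs ((hΦint.const_mul 2).indicator hB)
          intro ω
          simp only [Pi.sub_apply]
          by_cases hω : ω ∈ B
          · rw [Set.indicator_of_mem hω]
            calc |f₁ ω - f₂ ω| ≤ |f₁ ω| + |f₂ ω| := abs_sub _ _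
              _ ≤ 2 * Φ ω := by have := hb₁ ω; have := hb₂ ω; linarith
          · rw [Set.indicator_of_notMem hω, heq ω hω]
            simp
      _ = 2 * ∫ ω in B, Φ ω ∂Q := by
          rw [integral_indicator hB, integral_const_mul]
  have := abs_le.mp key
  linarith [this.1]


lemma coe_sub_eq_zero_iff' (a b : ℝ≥0) : (a:ℝ≥0∞) - b = 0 ↔ a ≤ b := by
  rw [tsub_eq_zero_iff_le, ENNReal.coe_le_coe]

lemma ofReal_le_coe_sub {a b : ℝ≥0} {ε : ℝ} (h : ε + (b:ℝ) ≤ (a:ℝ)) :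
    ENNReal.ofReal ε ≤ (a:ℝ≥0∞) - b := by
  rcases le_or_gt ε 0 with hε | hε
  · simp [ENNReal.ofReal_eq_zero.mpr hε]
  · have hba : b ≤ a := by
      rw [← NNReal.coe_le_coe]; linarith
    rw [← ENNReal.coe_sub, ← ENNReal.ofReal_coe_nnreal]
    apply ENNReal.ofReal_le_ofReal
    rw [NNReal.coe_sub hba]
    linarith

lemma meas_le_ofReal {Ω : Type*} [MeasurableSpace Ω] {Q : Measure Ω} [IsProbabilityMeasure Q]
    {B : Set Ω} {c : ℝ} (h : (Q B).toReal ≤ c) : Q B ≤ ENNReal.ofReal c := by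
  rw [← ENNReal.ofReal_toReal (measure_ne_top Q B)]
  exact ENNReal.ofReal_le_ofReal h

/-- **Convergence of the neural optimal stopping boundary method, continuous case**
(Theorem 5.6).

Assume (i) the conditional absolute continuity assumption with moduli `(ρ_t)` and
`ρ(ι) = Σ_t ρ_t(ι) → 0` as `ι → 0`; (ii) `Φ = Σ_t |Y_t|` square-integrable; (iii) tightness
of the laws of `(Ξ(X_t))`; (iv) `𝔑` a nonempty family of `[0,∞)`-valued boundaries,
continuous in space, with the universal approximation property on compact sets; and (v) a
continuous `[0,∞)`-valued optimal boundary `f⋄`.  Then for every `δ > 0` there are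
`ε, γ > 0` such that every `γ`-maximizer `g ∈ 𝔑` of the relaxed value `v(μ_·^ε)` satisfies
`v(τ_g) ≥ v(τ_{f⋄}) − δ`. -/
theorem neural_boundary_convergence_continuous
    {T Ω X E : Type*} [Fintype T] [Nonempty T] [LinearOrder T]
    [MeasurableSpace Ω]
    [TopologicalSpace X] [MeasurableSpace X] [BorelSpace X]
    [TopologicalSpace E] [T2Space E] [MeasurableSpace E] [BorelSpace E]
    (Q : Measure Ω) [IsProbabilityMeasure Q]
    (α : X → ℝ≥0) (hα : Measurable α) (Ξ : X → E) (hΞ : Measurable Ξ)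
    (Xp : T → Ω → X) (hX : ∀ t, Measurable (Xp t))
    (Y : T → Ω → ℝ) (hY : ∀ t, Measurable (Y t))
    (hΦ : Integrable (fun ω => (∑ t, |Y t ω|) ^ 2) Q)
    (ρ : T → ℝ≥0∞ → ℝ) (hρ : ∀ t ι, ρ t ι ∈ Set.Icc (0 : ℝ) 1)
    -- (i) conditional absolute continuity assumption
    (hAC : ∀ t (g : E → ℝ≥0∞), Measurable g → ∀ ι : ℝ≥0∞, 0 < ι →
      (Q {ω | g (Ξ (Xp t ω)) ≤ (α (Xp t ω) : ℝ≥0∞) ∧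
              (α (Xp t ω) : ℝ≥0∞) < g (Ξ (Xp t ω)) + ι}).toReal ≤ ρ t ι)
    -- (i) ρ(ι) → 0 as ι → 0
    (hρ0 : Filter.Tendsto (fun ι : ℝ => ∑ t, ρ t (ENNReal.ofReal ι))
      (nhdsWithin 0 (Set.Ioi 0)) (nhds 0))
    -- (iii) tightness of the laws of (Ξ(X_t))
    (htight : ∀ δ : ℝ, 0 < δ → ∃ K : Set E, IsCompact K ∧
      1 - δ ≤ (Q {ω | ∀ t, Ξ (Xp t ω) ∈ K}).toReal)
    -- (iv) hypothesis space of continuous [0,∞)-valued boundaries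
    (𝔑 : Set (T → E → ℝ≥0)) (h𝔑ne : 𝔑.Nonempty)
    (h𝔑c : ∀ g ∈ 𝔑, ∀ t, Continuous (g t))
    -- (iv) universal approximation property
    (hUAP : ∀ h : T → E → ℝ≥0, (∀ t, Continuous (h t)) →
      ∀ K : Set E, IsCompact K → ∀ ι : ℝ, 0 < ι →
      ∃ g ∈ 𝔑, ∀ t : T, ∀ ξ ∈ K, |(h t ξ : ℝ) - (g t ξ : ℝ)| ≤ ι)
    -- (v) continuous optimal stopping boundary
    (fstar : T → E → ℝ≥0) (hfstar : ∀ t, Continuous (fstar t)) :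
    ∀ δ : ℝ, 0 < δ → ∃ ε : ℝ, 0 < ε ∧ ∃ γ : ℝ, 0 < γ ∧
      ∀ g ∈ 𝔑,
        -- g is a γ-maximizer of the relaxed value v(μ_·^ε) over 𝔑
        (⨆ g' : 𝔑, ∫ ω, (∑ t, stopWeight
            (fun s => relaxChi ε (((g' : T → E → ℝ≥0) s (Ξ (Xp s ω)) : ℝ≥0∞) -
              (α (Xp s ω) : ℝ≥0∞))) t * Y t ω) ∂Q) - γ ≤
          (∫ ω, (∑ t, stopWeight
            (fun s => relaxChi ε ((g s (Ξ (Xp s ω)) : ℝ≥0∞) -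
              (α (Xp s ω) : ℝ≥0∞))) t * Y t ω) ∂Q) →
        -- then g is δ-optimal: v(τ_g) ≥ v(τ_{f⋄}) − δ
        (∫ ω, hitReward Y
            (firstHit (fun t => {x | fstar t (Ξ x) ≤ α x}) (fun t => Xp t ω)) ω ∂Q) - δ ≤
          ∫ ω, hitReward Y
            (firstHit (fun t => {x | g t (Ξ x) ≤ α x}) (fun t => Xp t ω)) ω ∂Q := by
  classical
  intro δ hδ
  -- the dominating function Φ
  set Φ : Ω → ℝ := fun ω => ∑ t, |Y t ω| with hΦdef
  have hΦ0 : ∀ ω, 0 ≤ Φ ω := fun ω => Finset.sum_nonneg fun t _ => abs_nonneg _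
  have hΦmeas : Measurable Φ := Finset.measurable_sum _ fun t _ => (hY t).abs
  have hΦint : Integrable Φ Q := by
    refine (hΦ.add (integrable_const 1)).mono' hΦmeas.aestronglyMeasurable
      (Filter.Eventually.of_forall fun ω => ?_)
    have h0 := hΦ0 ω
    rw [Real.norm_eq_abs, abs_of_nonneg h0]
    simp only [Pi.add_apply]
    nlinarith [sq_nonneg (Φ ω - 1)]
  have h8 : 0 < δ/8 := by linarith
  obtain ⟨η, hη, hsmall⟩ := integral_small Q Φ hΦint h8
  set θ := η/2 with hθdef
  have hθpos : 0 < θ := by positivity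
  -- choose r from the convergence of ρ
  have hev : ∀ᶠ ι in nhdsWithin (0:ℝ) (Set.Ioi 0),
      (∑ t, ρ t (ENNReal.ofReal ι)) < θ := hρ0.eventually_lt_const hθpos
  obtain ⟨r, hr, hsub⟩ := Metric.mem_nhdsWithin_iff.mp hev
  set ε := r/2 with hεdef
  set ι' := r/8 with hι'def
  have hε : 0 < ε := by positivity
  have hι' : 0 < ι' := by positivity
  have hρε : (∑ t, ρ t (ENNReal.ofReal ε)) < θ := by
    apply hsub
    constructor
    · rw [Metric.mem_ball, Real.dist_eq, sub_zero, abs_of_pos hε]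
      rw [hεdef]; linarith
    · exact hε
  have hρband : (∑ t, ρ t (ENNReal.ofReal (ε + 2*ι'))) < θ := by
    apply hsub
    have h1 : 0 < ε + 2*ι' := by positivity
    constructor
    · rw [Metric.mem_ball, Real.dist_eq, sub_zero, abs_of_pos h1]
      rw [hεdef, hι'def]; linarith
    · exact h1
  -- tightness and approximation
  obtain ⟨K, hKc, hKQ⟩ := htight θ hθpos
  obtain ⟨gs, hgs𝔑, hgsapp⟩ := hUAP fstar hfstar K hKc ι' hι'
  refine ⟨ε, hε, δ/2, by linarith, ?_⟩
  intro g hg hmax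
  -- weights are measurable for continuous boundaries
  have hpmeas : ∀ b : T → E → ℝ≥0, (∀ t, Continuous (b t)) → ∀ s : T,
      Measurable (fun ω => relaxChi ε ((b s (Ξ (Xp s ω)) : ℝ≥0∞) - (α (Xp s ω) : ℝ≥0∞))) := by
    intro b hb s
    exact (measurable_relaxChi ε).comp
      ((measurable_coe_nnreal_ennreal.comp ((hb s).measurable.comp (hΞ.comp (hX s)))).sub
        (measurable_coe_nnreal_ennreal.comp (hα.comp (hX s))))
  -- relaxed-value integrands: measurable, bounded by Φ, integrable
  have hWb : ∀ b : T → E → ℝ≥0, ∀ ω, |∑ t, stopWeight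
      (fun s => relaxChi ε ((b s (Ξ (Xp s ω)) : ℝ≥0∞) - (α (Xp s ω) : ℝ≥0∞))) t * Y t ω| ≤ Φ ω := by
    intro b ω
    refine le_trans (Finset.abs_sum_le_sum_abs _ _) ?_
    show _ ≤ Φ ω
    rw [hΦdef]
    apply Finset.sum_le_sum
    intro t _
    rw [abs_mul]
    have hmem := stopWeight_mem_Icc
      (fun s => relaxChi ε ((b s (Ξ (Xp s ω)) : ℝ≥0∞) - (α (Xp s ω) : ℝ≥0∞)))
      (fun s => relaxChi_mem_Icc ε _) t
    have habs : |stopWeight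
        (fun s => relaxChi ε ((b s (Ξ (Xp s ω)) : ℝ≥0∞) - (α (Xp s ω) : ℝ≥0∞))) t| ≤ 1 := by
      rw [abs_of_nonneg hmem.1]; exact hmem.2
    nlinarith [abs_nonneg (Y t ω)]
  have hWint : ∀ b : T → E → ℝ≥0, (∀ t, Continuous (b t)) → Integrable (fun ω => ∑ t, stopWeight
      (fun s => relaxChi ε ((b s (Ξ (Xp s ω)) : ℝ≥0∞) - (α (Xp s ω) : ℝ≥0∞))) t * Y t ω) Q := by
    intro b hb
    have hm : Measurable (fun ω => ∑ t, stopWeight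
        (fun s => relaxChi ε ((b s (Ξ (Xp s ω)) : ℝ≥0∞) - (α (Xp s ω) : ℝ≥0∞))) t * Y t ω) :=
      Finset.measurable_sum _ fun t _ =>
        (stopWeight_measurable _ (hpmeas b hb) t).mul (hY t)
    exact hΦint.mono' hm.aestronglyMeasurable
      (Filter.Eventually.of_forall fun ω => by rw [Real.norm_eq_abs]; exact hWb b ω)
  -- hitting-value integrands
  have hSmeas : ∀ b : T → E → ℝ≥0, (∀ t, Continuous (b t)) → ∀ t : T,
      MeasurableSet {x : X | b t (Ξ x) ≤ α x} :=
    fun b hb t => measurableSet_le ((hb t).measurable.comp hΞ) hα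
  have hRb : ∀ b : T → E → ℝ≥0, ∀ ω, |hitReward Y
      (firstHit (fun t => {x | b t (Ξ x) ≤ α x}) (fun t => Xp t ω)) ω| ≤ Φ ω :=
    fun b ω => abs_hitReward_le Y _ ω
  have hRint : ∀ b : T → E → ℝ≥0, (∀ t, Continuous (b t)) → Integrable (fun ω => hitReward Y
      (firstHit (fun t => {x | b t (Ξ x) ≤ α x}) (fun t => Xp t ω)) ω) Q := by
    intro b hb
    exact hΦint.mono'
      (measurable_hitReward_firstHit Y hY _ (hSmeas b hb) Xp hX).aestronglyMeasurable
      (Filter.Eventually.of_forall fun ω => by rw [Real.norm_eq_abs]; exact hRb b ω)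
  -- the fuzzy bad event for a continuous boundary b
  have hfuzzy : ∀ b : T → E → ℝ≥0, (∀ t, Continuous (b t)) →
      MeasurableSet (⋃ t : T, {ω | 0 < ((b t (Ξ (Xp t ω)) : ℝ≥0∞) - (α (Xp t ω) : ℝ≥0∞)) ∧
          ((b t (Ξ (Xp t ω)) : ℝ≥0∞) - (α (Xp t ω) : ℝ≥0∞)) < ENNReal.ofReal ε})
      ∧ Q (⋃ t : T, {ω | 0 < ((b t (Ξ (Xp t ω)) : ℝ≥0∞) - (α (Xp t ω) : ℝ≥0∞)) ∧
          ((b t (Ξ (Xp t ω)) : ℝ≥0∞) - (α (Xp t ω) : ℝ≥0∞)) < ENNReal.ofReal ε})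
        ≤ ENNReal.ofReal θ := by
    intro b hb
    have hum : ∀ t : T, Measurable (fun ω =>
        ((b t (Ξ (Xp t ω)) : ℝ≥0∞) - (α (Xp t ω) : ℝ≥0∞))) := fun t =>
      (measurable_coe_nnreal_ennreal.comp ((hb t).measurable.comp (hΞ.comp (hX t)))).sub
        (measurable_coe_nnreal_ennreal.comp (hα.comp (hX t)))
    have hms : ∀ t : T, MeasurableSet {ω | 0 < ((b t (Ξ (Xp t ω)) : ℝ≥0∞) - (α (Xp t ω) : ℝ≥0∞)) ∧
        ((b t (Ξ (Xp t ω)) : ℝ≥0∞) - (α (Xp t ω) : ℝ≥0∞)) < ENNReal.ofReal ε} := fun t =>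
      (((hum t) measurableSet_Ioi).inter ((hum t) measurableSet_Iio))
    refine ⟨MeasurableSet.iUnion hms, ?_⟩
    calc Q (⋃ t : T, _) ≤ ∑ t, Q {ω | 0 < ((b t (Ξ (Xp t ω)) : ℝ≥0∞) - (α (Xp t ω) : ℝ≥0∞)) ∧
          ((b t (Ξ (Xp t ω)) : ℝ≥0∞) - (α (Xp t ω) : ℝ≥0∞)) < ENNReal.ofReal ε} :=
        measure_iUnion_fintype_le Q _
      _ ≤ ∑ t, ENNReal.ofReal (ρ t (ENNReal.ofReal ε)) := by
        apply Finset.sum_le_sum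
        intro t _
        have hincl : {ω | 0 < ((b t (Ξ (Xp t ω)) : ℝ≥0∞) - (α (Xp t ω) : ℝ≥0∞)) ∧
            ((b t (Ξ (Xp t ω)) : ℝ≥0∞) - (α (Xp t ω) : ℝ≥0∞)) < ENNReal.ofReal ε}
            ⊆ {ω | ((b t (Ξ (Xp t ω)) : ℝ≥0∞) - ENNReal.ofReal ε) ≤ (α (Xp t ω) : ℝ≥0∞) ∧
              (α (Xp t ω) : ℝ≥0∞) < ((b t (Ξ (Xp t ω)) : ℝ≥0∞) - ENNReal.ofReal ε)
                + ENNReal.ofReal ε} := by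
          rintro ω ⟨h1, h2⟩
          constructor
          · rw [tsub_le_iff_right]
            calc (b t (Ξ (Xp t ω)) : ℝ≥0∞)
                ≤ ((b t (Ξ (Xp t ω)) : ℝ≥0∞) - (α (Xp t ω) : ℝ≥0∞)) + (α (Xp t ω) : ℝ≥0∞) :=
                  le_tsub_add
              _ ≤ ENNReal.ofReal ε + (α (Xp t ω) : ℝ≥0∞) := by
                  exact add_le_add_left h2.le _
              _ = (α (Xp t ω) : ℝ≥0∞) + ENNReal.ofReal ε := add_comm _ _
          · calc (α (Xp t ω) : ℝ≥0∞) < (b t (Ξ (Xp t ω)) : ℝ≥0∞) := by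
                  rwa [tsub_pos_iff_lt] at h1
              _ ≤ ((b t (Ξ (Xp t ω)) : ℝ≥0∞) - ENNReal.ofReal ε) + ENNReal.ofReal ε :=
                  le_tsub_add
        have hmeas' : Measurable (fun e => (b t e : ℝ≥0∞) - ENNReal.ofReal ε) :=
          (measurable_coe_nnreal_ennreal.comp (hb t).measurable).sub measurable_const
        have hbound := hAC t _ hmeas' (ENNReal.ofReal ε) (ENNReal.ofReal_pos.mpr hε)
        calc Q _ ≤ Q {ω | ((b t (Ξ (Xp t ω)) : ℝ≥0∞) - ENNReal.ofReal ε) ≤ (α (Xp t ω) : ℝ≥0∞) ∧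
              (α (Xp t ω) : ℝ≥0∞) < ((b t (Ξ (Xp t ω)) : ℝ≥0∞) - ENNReal.ofReal ε)
                + ENNReal.ofReal ε} := measure_mono hincl
          _ ≤ ENNReal.ofReal (ρ t (ENNReal.ofReal ε)) := meas_le_ofReal hbound
      _ = ENNReal.ofReal (∑ t, ρ t (ENNReal.ofReal ε)) :=
        (ENNReal.ofReal_sum_of_nonneg (fun t _ => (hρ t _).1)).symm
      _ ≤ ENNReal.ofReal θ := ENNReal.ofReal_le_ofReal hρε.le
  -- band bad event for fstar
  set band : T → Set Ω := fun t => {ω | (α (Xp t ω) : ℝ) < (fstar t (Ξ (Xp t ω)) : ℝ) + ι' ∧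
    (fstar t (Ξ (Xp t ω)) : ℝ) < (α (Xp t ω) : ℝ) + ε + ι'} with hbanddef
  have hαr : ∀ t : T, Measurable (fun ω => (α (Xp t ω) : ℝ)) := fun t =>
    measurable_coe_nnreal_real.comp (hα.comp (hX t))
  have hfr : ∀ t : T, Measurable (fun ω => (fstar t (Ξ (Xp t ω)) : ℝ)) := fun t =>
    measurable_coe_nnreal_real.comp ((hfstar t).measurable.comp (hΞ.comp (hX t)))
  have hbandmeas : ∀ t, MeasurableSet (band t) := by
    intro t
    rw [hbanddef]
    exact (measurableSet_lt (hαr t) ((hfr t).add_const ι')).inter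
      (measurableSet_lt (hfr t) (((hαr t).add_const ε).add_const ι'))
  have hbandQ : Q (⋃ t, band t) ≤ ENNReal.ofReal θ := by
    calc Q (⋃ t, band t) ≤ ∑ t, Q (band t) := measure_iUnion_fintype_le Q _
      _ ≤ ∑ t, ENNReal.ofReal (ρ t (ENNReal.ofReal (ε + 2*ι'))) := by
        apply Finset.sum_le_sum
        intro t _
        have hincl : band t ⊆ {ω | ((fstar t (Ξ (Xp t ω)) : ℝ≥0∞) - ENNReal.ofReal (ε + ι'))
              ≤ (α (Xp t ω) : ℝ≥0∞) ∧
            (α (Xp t ω) : ℝ≥0∞) < ((fstar t (Ξ (Xp t ω)) : ℝ≥0∞) - ENNReal.ofReal (ε + ι'))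
              + ENNReal.ofReal (ε + 2*ι')} := by
          rintro ω ⟨h1, h2⟩
          constructor
          · rw [tsub_le_iff_right]
            rw [← ENNReal.ofReal_coe_nnreal (p := fstar t (Ξ (Xp t ω))),
              ← ENNReal.ofReal_coe_nnreal (p := α (Xp t ω)),
              ← ENNReal.ofReal_add (α (Xp t ω)).coe_nonneg (by positivity)]
            exact ENNReal.ofReal_le_ofReal (by linarith)
          · have e1 : ENNReal.ofReal (ε + 2*ι') = ENNReal.ofReal (ε + ι') + ENNReal.ofReal ι' := by
              rw [← ENNReal.ofReal_add (by positivity) hι'.le]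
              ring_nf
            have e2 : (fstar t (Ξ (Xp t ω)) : ℝ≥0∞)
                ≤ ((fstar t (Ξ (Xp t ω)) : ℝ≥0∞) - ENNReal.ofReal (ε + ι'))
                  + ENNReal.ofReal (ε + ι') := le_tsub_add
            calc (α (Xp t ω) : ℝ≥0∞) < (fstar t (Ξ (Xp t ω)) : ℝ≥0∞) + ENNReal.ofReal ι' := by
                  rw [← ENNReal.ofReal_coe_nnreal (p := fstar t (Ξ (Xp t ω))),
                    ← ENNReal.ofReal_coe_nnreal (p := α (Xp t ω)),
                    ← ENNReal.ofReal_add (fstar t (Ξ (Xp t ω))).coe_nonneg hι'.le]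
                  exact (ENNReal.ofReal_lt_ofReal_iff (by positivity)).mpr h1
              _ ≤ (((fstar t (Ξ (Xp t ω)) : ℝ≥0∞) - ENNReal.ofReal (ε + ι'))
                    + ENNReal.ofReal (ε + ι')) + ENNReal.ofReal ι' := add_le_add_left e2 _
              _ = ((fstar t (Ξ (Xp t ω)) : ℝ≥0∞) - ENNReal.ofReal (ε + ι'))
                    + ENNReal.ofReal (ε + 2*ι') := by rw [e1, add_assoc]
        have hmeas' : Measurable (fun e => (fstar t e : ℝ≥0∞) - ENNReal.ofReal (ε + ι')) :=
          (measurable_coe_nnreal_ennreal.comp (hfstar t).measurable).sub measurable_const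
        have hbound := hAC t _ hmeas' (ENNReal.ofReal (ε + 2*ι'))
          (ENNReal.ofReal_pos.mpr (by positivity))
        calc Q (band t) ≤ Q _ := measure_mono hincl
          _ ≤ ENNReal.ofReal (ρ t (ENNReal.ofReal (ε + 2*ι'))) := meas_le_ofReal hbound
      _ = ENNReal.ofReal (∑ t, ρ t (ENNReal.ofReal (ε + 2*ι'))) :=
        (ENNReal.ofReal_sum_of_nonneg (fun t _ => (hρ t _).1)).symm
      _ ≤ ENNReal.ofReal θ := ENNReal.ofReal_le_ofReal hρband.le
  -- the tightness bad event
  set goodK : Set Ω := {ω | ∀ t, Ξ (Xp t ω) ∈ K} with hgoodKdef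
  have hgoodmeas : MeasurableSet goodK := by
    have : goodK = ⋂ t, (fun ω => Ξ (Xp t ω)) ⁻¹' K := by
      ext ω; simp [hgoodKdef]
    rw [this]
    exact MeasurableSet.iInter fun t => (hΞ.comp (hX t)) hKc.isClosed.measurableSet
  have hbadKQ : Q goodKᶜ ≤ ENNReal.ofReal θ := by
    apply meas_le_ofReal
    rw [prob_compl_eq_one_sub hgoodmeas,
      ENNReal.toReal_sub_of_le prob_le_one ENNReal.one_ne_top]
    simp only [ENNReal.toReal_one]
    linarith [hKQ]
  -- the combined bad event for the approximating boundary
  set B2 : Set Ω := (⋃ t, band t) ∪ goodKᶜ with hB2def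
  have hB2meas : MeasurableSet B2 :=
    (MeasurableSet.iUnion hbandmeas).union hgoodmeas.compl
  have hB2Q : Q B2 ≤ ENNReal.ofReal η := by
    calc Q B2 ≤ Q (⋃ t, band t) + Q goodKᶜ := measure_union_le _ _
      _ ≤ ENNReal.ofReal θ + ENNReal.ofReal θ := add_le_add hbandQ hbadKQ
      _ = ENNReal.ofReal (θ + θ) := (ENNReal.ofReal_add hθpos.le hθpos.le).symm
      _ = ENNReal.ofReal η := by rw [hθdef]; ring_nf
  -- pointwise identity off B2 : relaxed value of gs equals hitting value of fstar
  have hpt2 : ∀ ω ∉ B2,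
      (∑ t, stopWeight (fun s => relaxChi ε ((gs s (Ξ (Xp s ω)) : ℝ≥0∞) -
          (α (Xp s ω) : ℝ≥0∞))) t * Y t ω)
        = hitReward Y (firstHit (fun t => {x | fstar t (Ξ x) ≤ α x}) (fun t => Xp t ω)) ω := by
    intro ω hω
    apply sum_stopWeight_mul_eq_hitReward
    intro t
    have hKω : Ξ (Xp t ω) ∈ K := by
      have h1 : ω ∉ goodKᶜ := fun h => hω (Set.mem_union_right _ h)
      have h2 : ω ∈ goodK := Set.not_notMem.mp h1
      exact h2 t
    have happ := abs_le.mp (hgsapp t _ hKω)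
    have hnb : ω ∉ band t := fun h => hω (Set.mem_union_left _ (Set.mem_iUnion.mpr ⟨t, h⟩))
    rw [hbanddef] at hnb
    simp only [Set.mem_setOf_eq, not_and, not_lt] at hnb
    by_cases hcase : (α (Xp t ω) : ℝ) < (fstar t (Ξ (Xp t ω)) : ℝ) + ι'
    · right
      have h2 := hnb hcase
      constructor
      · apply relaxChi_eq_zero_of_le hε
        apply ofReal_le_coe_sub
        linarith [happ.2]
      · intro hle
        rw [← NNReal.coe_le_coe] at hle
        linarith
    · left
      have h1 : (fstar t (Ξ (Xp t ω)) : ℝ) + ι' ≤ (α (Xp t ω) : ℝ) := not_lt.mp hcase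
      constructor
      · have hle : gs t (Ξ (Xp t ω)) ≤ α (Xp t ω) := by
          rw [← NNReal.coe_le_coe]
          linarith [happ.1]
        have hu : ((gs t (Ξ (Xp t ω)) : ℝ≥0∞) - (α (Xp t ω) : ℝ≥0∞)) = 0 :=
          (coe_sub_eq_zero_iff' _ _).mpr hle
        rw [hu]
        exact relaxChi_zero ε
      · rw [← NNReal.coe_le_coe]
        linarith
  -- pointwise identity off the fuzzy event of g
  set Bf : Set Ω := ⋃ t : T, {ω | 0 < ((g t (Ξ (Xp t ω)) : ℝ≥0∞) - (α (Xp t ω) : ℝ≥0∞)) ∧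
      ((g t (Ξ (Xp t ω)) : ℝ≥0∞) - (α (Xp t ω) : ℝ≥0∞)) < ENNReal.ofReal ε} with hBfdef
  obtain ⟨hBfmeas, hBfQ⟩ := hfuzzy g (h𝔑c g hg)
  have hpt1 : ∀ ω ∉ Bf,
      (∑ t, stopWeight (fun s => relaxChi ε ((g s (Ξ (Xp s ω)) : ℝ≥0∞) -
          (α (Xp s ω) : ℝ≥0∞))) t * Y t ω)
        = hitReward Y (firstHit (fun t => {x | g t (Ξ x) ≤ α x}) (fun t => Xp t ω)) ω := by
    intro ω hω
    apply sum_stopWeight_mul_eq_hitReward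
    intro t
    have hnf : ¬(0 < ((g t (Ξ (Xp t ω)) : ℝ≥0∞) - (α (Xp t ω) : ℝ≥0∞)) ∧
        ((g t (Ξ (Xp t ω)) : ℝ≥0∞) - (α (Xp t ω) : ℝ≥0∞)) < ENNReal.ofReal ε) := by
      intro h
      exact hω (by rw [hBfdef]; exact Set.mem_iUnion.mpr ⟨t, h⟩)
    by_cases hle : g t (Ξ (Xp t ω)) ≤ α (Xp t ω)
    · left
      have hu : ((g t (Ξ (Xp t ω)) : ℝ≥0∞) - (α (Xp t ω) : ℝ≥0∞)) = 0 :=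
        (coe_sub_eq_zero_iff' _ _).mpr hle
      exact ⟨by rw [hu]; exact relaxChi_zero ε, hle⟩
    · right
      have hpos : 0 < ((g t (Ξ (Xp t ω)) : ℝ≥0∞) - (α (Xp t ω) : ℝ≥0∞)) :=
        tsub_pos_iff_lt.mpr (ENNReal.coe_lt_coe.mpr (not_le.mp hle))
      have hge : ENNReal.ofReal ε ≤ ((g t (Ξ (Xp t ω)) : ℝ≥0∞) - (α (Xp t ω) : ℝ≥0∞)) := by
        by_contra hlt
        exact hnf ⟨hpos, not_le.mp hlt⟩
      exact ⟨relaxChi_eq_zero_of_le hε hge, hle⟩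
  -- the integral comparison chain
  have hchain1 := integral_diff_le Q Φ _ _ hΦint (hWint gs (h𝔑c gs hgs𝔑))
    (hRint fstar hfstar) hB2meas hpt2 (hWb gs) (hRb fstar)
  have hchain2 := integral_diff_le Q Φ _ _ hΦint (hRint g (h𝔑c g hg))
    (hWint g (h𝔑c g hg)) hBfmeas (fun ω hω => (hpt1 ω hω).symm) (hRb g) (hWb g)
  have hsmall2 : ∫ ω in B2, Φ ω ∂Q ≤ δ/8 := hsmall B2 hB2Q
  have hsmallf : ∫ ω in Bf, Φ ω ∂Q ≤ δ/8 := hsmall Bf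
    (le_trans hBfQ (ENNReal.ofReal_le_ofReal (by rw [hθdef]; linarith)))
  have hbdd : BddAbove (Set.range fun g' : 𝔑 => ∫ ω, (∑ t, stopWeight
      (fun s => relaxChi ε (((g' : T → E → ℝ≥0) s (Ξ (Xp s ω)) : ℝ≥0∞) -
        (α (Xp s ω) : ℝ≥0∞))) t * Y t ω) ∂Q) := by
    refine ⟨∫ ω, Φ ω ∂Q, ?_⟩
    rintro x ⟨g', rfl⟩
    exact integral_mono (hWint _ (h𝔑c _ g'.2)) hΦint
      (fun ω => (le_abs_self _).trans (hWb _ ω))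
  have hsup : (∫ ω, (∑ t, stopWeight
      (fun s => relaxChi ε ((gs s (Ξ (Xp s ω)) : ℝ≥0∞) -
        (α (Xp s ω) : ℝ≥0∞))) t * Y t ω) ∂Q)
      ≤ ⨆ g' : 𝔑, ∫ ω, (∑ t, stopWeight
        (fun s => relaxChi ε (((g' : T → E → ℝ≥0) s (Ξ (Xp s ω)) : ℝ≥0∞) -
          (α (Xp s ω) : ℝ≥0∞))) t * Y t ω) ∂Q :=
    le_ciSup hbdd (⟨gs, hgs𝔑⟩ : 𝔑)
  linarith [hchain1, hchain2, hsmall2, hsmallf, hsup, hmax]
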